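/- arXiv:1601.00611 — 2 statements merged into one kernel-verified Lean document; each statement's English description precedes it below -/
import Mathlib

section
/- With Q an 𝔪_ξ-primary ideal, B = {(x−ξ)^{α₀},…,(x−ξ)^{α_{δ−1}}} a basis of ℂ[x]/Q with dual basis Λ₀,…,Λ_{δ−1}, and M the tuple of multiplication matrices by (xᵢ−ξᵢ) in the basis B: for every q ∈ ℂ[x], the normal form of q modulo Q equals q(ξ+M)(1), where q(ξ+M) = Σ_γ (1/γ!)∂_ξ^γ(q)·M^γ, and moreover q(ξ+M)(1) = Σ_{i=0}^{δ−1} Λᵢ(q)·(x−ξ)^{αᵢ}. -/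
open MvPolynomial

noncomputable section

/-- Iterated partial derivative operator `∂^β` on polynomials. -/
def pdiff {n : ℕ} {K : Type} [CommSemiring K] (β : Fin n →₀ ℕ) :
    Module.End K (MvPolynomial (Fin n) K) :=
  (List.ofFn fun i : Fin n =>
    ((MvPolynomial.pderiv i : Derivation K _ _).toLinearMap ^ (β i))).prod

/-- Action of a polynomial differential operator at the point ξ:
`Λ = Σ_β c_β ∂^β ↦ (p ↦ Σ_β c_β (∂^β p)(ξ))`. -/
def dapply {n : ℕ} (ξ : Fin n → ℂ) (Λ : (Fin n →₀ ℕ) →₀ ℂ)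
    (p : MvPolynomial (Fin n) ℂ) : ℂ :=
  Λ.sum fun β c => c * eval ξ (pdiff β p)

def dapplyL {n : ℕ} (ξ : Fin n → ℂ) (p : MvPolynomial (Fin n) ℂ) :
    ((Fin n →₀ ℕ) →₀ ℂ) →ₗ[ℂ] ℂ where
  toFun Λ := dapply ξ Λ p
  map_add' a b := Finsupp.sum_add_index' (fun β => zero_mul _)
    (fun β c d => add_mul c d _)
  map_smul' c a := by
    classical
    simp only [RingHom.id_apply, smul_eq_mul, dapply]
    rw [Finsupp.sum_smul_index fun β => zero_mul ((eval ξ) ((pdiff β) p)), Finsupp.mul_sum]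
    exact Finsupp.sum_congr fun β _ => mul_assoc _ _ _

/-- The space `I^⊥ ∩ ℂ[∂_ξ]` of polynomial differential operators at ξ
annihilating the ideal `I`. -/
def dualSpace {n : ℕ} (I : Ideal (MvPolynomial (Fin n) ℂ)) (ξ : Fin n → ℂ) :
    Submodule ℂ ((Fin n →₀ ℕ) →₀ ℂ) :=
  ⨅ p ∈ I, LinearMap.ker (dapplyL ξ p)

lemma mem_dualSpace {n : ℕ} {I : Ideal (MvPolynomial (Fin n) ℂ)} {ξ : Fin n → ℂ}
    {Λ : (Fin n →₀ ℕ) →₀ ℂ} : Λ ∈ dualSpace I ξ ↔ ∀ p ∈ I, dapply ξ Λ p = 0 := by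
  simp only [dualSpace, Submodule.mem_iInf, LinearMap.mem_ker]
  rfl

/-- The multiplicity of ξ as a root of I. -/
def mult {n : ℕ} (I : Ideal (MvPolynomial (Fin n) ℂ)) (ξ : Fin n → ℂ) : ℕ :=
  Module.finrank ℂ (dualSpace I ξ)

/-- Order (total degree in the ∂ variables) of a polynomial differential operator. -/
def ordD {n : ℕ} (Λ : (Fin n →₀ ℕ) →₀ ℂ) : ℕ :=
  Λ.support.sup fun β => β.sum fun _ k => k

/-- The nil-index of I at ξ: maximal order of elements of the dual space. -/
def nilIndex {n : ℕ} (I : Ideal (MvPolynomial (Fin n) ℂ)) (ξ : Fin n → ℂ) : ℕ :=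
  sSup {t | ∃ Λ ∈ dualSpace I ξ, Λ ≠ 0 ∧ ordD Λ = t}

/-- The maximal ideal at ξ. -/
def maxIdeal {n : ℕ} (ξ : Fin n → ℂ) : Ideal (MvPolynomial (Fin n) ℂ) :=
  Ideal.span (Set.range fun i => X i - C (ξ i))

/-- `(x-ξ)^α`. -/
def xpow {n : ℕ} (ξ : Fin n → ℂ) (α : Fin n →₀ ℕ) : MvPolynomial (Fin n) ℂ :=
  ∏ i : Fin n, (X i - C (ξ i)) ^ (α i)

/-- multi-index factorial -/
def mfact {n : ℕ} (β : Fin n →₀ ℕ) : ℕ := ∏ i : Fin n, Nat.factorial (β i)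

def mdeg {n : ℕ} (β : Fin n →₀ ℕ) : ℕ := β.sum fun _ k => k

set_option synthInstance.maxHeartbeats 1000000
set_option maxHeartbeats 1000000

lemma pderiv_prod_eq_zero {n : ℕ} (i : Fin n) (ξ : Fin n → ℂ) (s : Finset (Fin n))
    (hi : i ∉ s) (γ : Fin n →₀ ℕ) :
    pderiv i (∏ j ∈ s, (X j - C (ξ j)) ^ (γ j)) = 0 := by
  induction s using Finset.induction with
  | empty => simp
  | @insert j t hj ih =>
    rw [Finset.prod_insert hj]
    have hij : i ≠ j := fun h => hi (h ▸ Finset.mem_insert_self j t)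
    have h1 : pderiv i ((X j - C (ξ j)) ^ (γ j)) = 0 := by
      have : pderiv i (X j - C (ξ j)) = 0 := by
        simp [pderiv_X, hij.symm, Pi.single_eq_of_ne hij.symm]
      rw [Derivation.leibniz_pow]
      rw [this]
      simp
    rw [pderiv_mul, h1, ih (fun h => hi (Finset.mem_insert_of_mem h))]
    simp

lemma pderiv_xpow {n : ℕ} (i : Fin n) (ξ : Fin n → ℂ) (γ : Fin n →₀ ℕ) :
    pderiv i (xpow ξ γ) = (γ i : MvPolynomial (Fin n) ℂ) * xpow ξ (γ - Finsupp.single i 1) := by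
  classical
  unfold xpow
  rw [← Finset.mul_prod_erase Finset.univ _ (Finset.mem_univ i), pderiv_mul,
    pderiv_prod_eq_zero i ξ _ (Finset.notMem_erase i _) γ]
  have hpd : pderiv i ((X i - C (ξ i)) ^ (γ i)) =
      (γ i : MvPolynomial (Fin n) ℂ) * (X i - C (ξ i)) ^ (γ i - 1) := by
    rw [Derivation.leibniz_pow]
    have : pderiv i (X i - C (ξ i)) = 1 := by simp
    rw [this]
    simp [mul_comm]
  rw [hpd]
  have hrest : ∏ j ∈ Finset.univ.erase i, (X j - C (ξ j)) ^ (γ j)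
      = ∏ j ∈ Finset.univ.erase i, (X j - C (ξ j)) ^ (((γ - Finsupp.single i 1 : Fin n →₀ ℕ) j)) := by
    apply Finset.prod_congr rfl
    intro j hj
    have : j ≠ i := Finset.ne_of_mem_erase hj
    simp [Finsupp.tsub_apply, Finsupp.single_eq_of_ne' (Ne.symm this)]
  have hii : ((γ - Finsupp.single i 1 : Fin n →₀ ℕ) i) = γ i - 1 := by
    simp [Finsupp.tsub_apply]
  rw [hrest]
  rw [← Finset.mul_prod_erase Finset.univ (fun j => (X j - C (ξ j)) ^ (((γ - Finsupp.single i 1 : Fin n →₀ ℕ) j))) (Finset.mem_univ i), hii]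
  ring

lemma pderiv_pow_smon {n : ℕ} (i : Fin n) (ξ : Fin n → ℂ) (γ : Fin n →₀ ℕ) (c : ℂ) (k : ℕ) :
    (((pderiv i : Derivation ℂ _ _).toLinearMap)^k) (C c * xpow ξ γ)
      = C (c * ((γ i).descFactorial k : ℂ)) * xpow ξ (γ - Finsupp.single i k) := by
  induction k with
  | zero => simp
  | succ k ih =>
    rw [pow_succ', Module.End.mul_apply, ih]
    have : (pderiv i : Derivation ℂ _ _).toLinearMap
        (C (c * ((γ i).descFactorial k : ℂ)) * xpow ξ (γ - Finsupp.single i k))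
        = C (c * ((γ i).descFactorial k : ℂ)) *
          (((γ - Finsupp.single i k : Fin n →₀ ℕ) i : MvPolynomial (Fin n) ℂ) *
            xpow ξ (γ - Finsupp.single i k - Finsupp.single i 1)) := by
      show pderiv i _ = _
      rw [pderiv_mul, pderiv_C, ← pderiv_xpow]
      ring
    rw [this]
    have h1 : (γ - Finsupp.single i k : Fin n →₀ ℕ) i = γ i - k := by
      simp
    have h2 : γ - Finsupp.single i k - Finsupp.single i 1 = γ - Finsupp.single i (k+1) := by
      rw [tsub_tsub, ← Finsupp.single_add]
    rw [h1, h2, Nat.descFactorial_succ, Nat.cast_mul, ← mul_assoc, map_mul, map_natCast]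
    rw [map_mul, map_mul, map_natCast, map_natCast]
    ring

lemma list_single_sum_eq_zero {n : ℕ} (β : Fin n →₀ ℕ) (i : Fin n) :
    ∀ (t : List (Fin n)), i ∉ t →
      ((t.map fun j => Finsupp.single j (β j)).sum : Fin n →₀ ℕ) i = 0 := by
  intro t hit
  induction t with
  | nil => simp
  | cons j t ih =>
    simp only [List.map_cons, List.sum_cons, Finsupp.add_apply]
    have hji : j ≠ i := by rintro rfl; exact hit List.mem_cons_self
    rw [ih (fun h => hit (List.mem_cons_of_mem j h)), Finsupp.single_eq_of_ne' hji]

lemma pdiff_list_xpow {n : ℕ} (ξ : Fin n → ℂ) (β : Fin n →₀ ℕ) :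
    ∀ (l : List (Fin n)), l.Nodup → ∀ (γ : Fin n →₀ ℕ) (c : ℂ),
    ((l.map fun i => ((pderiv i : Derivation ℂ _ _).toLinearMap ^ (β i))).prod) (C c * xpow ξ γ)
    = C (c * (l.map fun i => ((γ i).descFactorial (β i) : ℂ)).prod)
      * xpow ξ (γ - (l.map fun i => Finsupp.single i (β i)).sum) := by
  intro l
  induction l with
  | nil => simp
  | cons i t ih =>
    intro hnd γ c
    have hit : i ∉ t := (List.nodup_cons.mp hnd).1
    simp only [List.map_cons, List.prod_cons, List.sum_cons, Module.End.mul_apply]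
    rw [ih (List.nodup_cons.mp hnd).2 γ c, pderiv_pow_smon]
    have h1 : ((γ - (t.map fun j => Finsupp.single j (β j)).sum : Fin n →₀ ℕ) i) = γ i := by
      rw [Finsupp.tsub_apply, list_single_sum_eq_zero β i t hit]; rfl
    have h2 : γ - (t.map fun j => Finsupp.single j (β j)).sum - Finsupp.single i (β i)
        = γ - (Finsupp.single i (β i) + (t.map fun j => Finsupp.single j (β j)).sum) := by
      rw [tsub_tsub, add_comm]
    rw [h1, h2]
    congr 2
    ring

lemma pdiff_xpow {n : ℕ} (ξ : Fin n → ℂ) (β γ : Fin n →₀ ℕ) :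
    pdiff β (xpow ξ γ)
      = C (∏ i, ((γ i).descFactorial (β i) : ℂ)) * xpow ξ (γ - β) := by
  have h := pdiff_list_xpow ξ β (List.finRange n) (List.nodup_finRange n) γ 1
  rw [map_one, one_mul, one_mul] at h
  have e1 : (List.ofFn fun i : Fin n =>
      ((MvPolynomial.pderiv i : Derivation ℂ _ _).toLinearMap ^ (β i)))
      = (List.finRange n).map fun i => ((pderiv i : Derivation ℂ _ _).toLinearMap ^ (β i)) :=
    List.ofFn_eq_map
  have e2 : ((List.finRange n).map fun i => ((γ i).descFactorial (β i) : ℂ)).prod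
      = ∏ i, ((γ i).descFactorial (β i) : ℂ) := by
    rw [← List.ofFn_eq_map, List.prod_ofFn]
  have e3 : ((List.finRange n).map fun i => Finsupp.single i (β i)).sum = β := by
    rw [← List.ofFn_eq_map, List.sum_ofFn]
    rw [← Finsupp.sum_fintype β Finsupp.single (fun i => Finsupp.single_zero i)]
    exact Finsupp.sum_single β
  rw [pdiff, e1, h, e2, e3]

lemma eval_pdiff_xpow {n : ℕ} (ξ : Fin n → ℂ) (β γ : Fin n →₀ ℕ) :
    eval ξ (pdiff β (xpow ξ γ)) = if β = γ then (mfact γ : ℂ) else 0 := by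
  rw [pdiff_xpow, map_mul, eval_C]
  by_cases h : β = γ
  · rcases h with rfl
    have h0 : β - β = 0 := by simp
    rw [h0]
    have hx : xpow ξ (0 : Fin n →₀ ℕ) = 1 := by simp [xpow]
    rw [hx, map_one, mul_one, if_pos rfl]
    rw [mfact, Nat.cast_prod]
    exact Finset.prod_congr rfl fun i _ => by rw [Nat.descFactorial_self]
  · rw [if_neg h]
    by_cases hle : ∀ i, γ i ≤ β i
    · -- some β i > γ i since β ≠ γ... not necessarily; but if γ ≤ β and β ≠ γ then ∃ i, γ i < β i
      have : ∃ i, γ i < β i := by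
        by_contra hc
        push_neg at hc
        exact h (Finsupp.ext fun i => le_antisymm (hc i) (hle i))
      obtain ⟨i, hi⟩ := this
      have : ((γ i).descFactorial (β i) : ℂ) = 0 := by
        rw [Nat.descFactorial_eq_zero_iff_lt.mpr hi, Nat.cast_zero]
      rw [Finset.prod_eq_zero (Finset.mem_univ i) this, zero_mul]
    · push_neg at hle
      obtain ⟨i, hi⟩ := hle
      have : eval ξ (xpow ξ (γ - β)) = 0 := by
        rw [xpow, map_prod]
        apply Finset.prod_eq_zero (Finset.mem_univ i)
        rw [map_pow, map_sub, eval_X, eval_C, sub_self]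
        exact zero_pow (by simp [Finsupp.tsub_apply]; omega)
      rw [this, mul_zero]

set_option synthInstance.maxHeartbeats 1000000 in
set_option maxHeartbeats 2000000 in
lemma J_pow_eq_bot {n δ : ℕ}
    (Q : Ideal (MvPolynomial (Fin n) ℂ)) (ξ : Fin n → ℂ)
    (hrad : Q.radical = maxIdeal ξ)
    (b : Module.Basis (Fin δ) ℂ (MvPolynomial (Fin n) ℂ ⧸ Q)) :
    (Ideal.map (Ideal.Quotient.mk Q) (maxIdeal ξ))^δ = ⊥ := by
  classical
  set R := MvPolynomial (Fin n) ℂ ⧸ Q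
  set J : Ideal R := Ideal.map (Ideal.Quotient.mk Q) (maxIdeal ξ) with hJ
  haveI : FiniteDimensional ℂ R := Module.Finite.of_basis b
  have hdim : Module.finrank ℂ R = δ := Module.finrank_eq_card_basis b ▸ by simp
  -- J is nilpotent
  obtain ⟨N, hN⟩ : ∃ N, (maxIdeal ξ)^N ≤ Q := by
    have hfg : Q.radical.FG := IsNoetherian.noetherian _
    obtain ⟨N, hN⟩ := Ideal.exists_radical_pow_le_of_fg Q hfg
    rw [hrad] at hN
    exact ⟨N, hN⟩
  have hJN : J ^ N = ⊥ := by
    rw [hJ, ← Ideal.map_pow]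
    rw [eq_bot_iff]
    calc Ideal.map (Ideal.Quotient.mk Q) ((maxIdeal ξ)^N)
        ≤ Ideal.map (Ideal.Quotient.mk Q) Q := Ideal.map_mono hN
      _ = ⊥ := by rw [Ideal.map_quotient_self]
  -- if a power stabilizes it is bot
  have hstab : ∀ k, J^(k+1) = J^k → J^k = ⊥ := by
    intro k hk
    have : ∀ m, J^(k+m) = J^k := by
      intro m
      induction m with
      | zero => rfl
      | succ m ih =>
        rw [show k+(m+1) = (k+m)+1 by ring, pow_succ J (k+m), ih, ← pow_succ J k, hk]
    rw [eq_bot_iff, ← hJN, ← this N]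
    exact Ideal.pow_le_pow_right (by omega)
  -- finrank chain
  have hchain : ∀ k, J^k = ⊥ ∨ Module.finrank ℂ ((J^k).restrictScalars ℂ) + k ≤ δ := by
    intro k
    induction k with
    | zero =>
      right
      rw [pow_zero J]
      have := Submodule.finrank_le ((1 : Ideal R).restrictScalars ℂ)
      omega
    | succ k ih =>
      rcases ih with h | h
      · left
        rw [eq_bot_iff, ← h]
        exact Ideal.pow_le_pow_right (by omega)
      · by_cases hb : J^(k+1) = ⊥
        · left; exact hb
        · right
          have hlt : J^(k+1) < J^k := by
            refine lt_of_le_of_ne (Ideal.pow_le_pow_right (by omega)) ?_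
            intro he
            exact hb (le_bot_iff.mp (hstab k he ▸ (Ideal.pow_le_pow_right (by omega) : J^(k+1) ≤ J^k)))
          have hlt' : (J^(k+1)).restrictScalars ℂ < (J^k).restrictScalars ℂ := by
            constructor
            · intro x hx; exact hlt.le hx
            · intro hle
              exact hlt.ne (le_antisymm hlt.le (fun x hx => hle hx))
          have := Submodule.finrank_lt_finrank_of_lt hlt'
          omega
  rcases hchain δ with h | h
  · exact h
  · have h0 : Module.finrank ℂ ((J^δ).restrictScalars ℂ) = 0 := by omega
    have : (J^δ).restrictScalars ℂ = ⊥ := Submodule.finrank_eq_zero.mp h0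
    rw [eq_bot_iff]
    intro x hx
    exact (Submodule.mem_bot _).mp (this ▸ hx : x ∈ (⊥ : Submodule ℂ R))

-- dapply linearity in p
lemma dapply_add {n : ℕ} (ξ : Fin n → ℂ) (Λ : (Fin n →₀ ℕ) →₀ ℂ)
    (p q : MvPolynomial (Fin n) ℂ) :
    dapply ξ Λ (p + q) = dapply ξ Λ p + dapply ξ Λ q := by
  unfold dapply
  rw [← Finsupp.sum_add]
  exact Finsupp.sum_congr fun β _ => by rw [map_add, map_add, mul_add]

lemma dapply_smul {n : ℕ} (ξ : Fin n → ℂ) (Λ : (Fin n →₀ ℕ) →₀ ℂ)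
    (c : ℂ) (p : MvPolynomial (Fin n) ℂ) :
    dapply ξ Λ (c • p) = c * dapply ξ Λ p := by
  unfold dapply
  rw [Finsupp.mul_sum]
  refine Finsupp.sum_congr fun β _ => ?_
  rw [map_smul, smul_eq_C_mul, map_mul, eval_C]
  ring

lemma dapply_xpow_self {n : ℕ} (ξ : Fin n → ℂ) (Λ : (Fin n →₀ ℕ) →₀ ℂ) (γ : Fin n →₀ ℕ) :
    dapply ξ Λ (xpow ξ γ) = Λ γ * (mfact γ : ℂ) := by
  classical
  unfold dapply
  have : ∀ β c, c * eval ξ (pdiff β (xpow ξ γ)) = if β = γ then c * (mfact γ : ℂ) else 0 := by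
    intro β c
    rw [eval_pdiff_xpow, mul_ite, mul_zero]
  have e1 : (Λ.sum fun β c => c * eval ξ (pdiff β (xpow ξ γ)))
      = Λ.sum fun β c => if β = γ then c * (mfact γ : ℂ) else 0 :=
    Finsupp.sum_congr fun β _ => this β (Λ β)
  rw [e1, Finsupp.sum_ite_eq' Λ γ (fun _ c => c * (mfact γ : ℂ))]
  by_cases h : γ ∈ Λ.support
  · rw [if_pos h]
  · rw [if_neg h, Finsupp.notMem_support_iff.mp h, zero_mul]

-- xpow in power of maximal ideal
lemma xpow_mem_pow {n : ℕ} (ξ : Fin n → ℂ) (γ : Fin n →₀ ℕ) :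
    xpow ξ γ ∈ (maxIdeal ξ)^(mdeg γ) := by
  classical
  have key : ∀ s : Finset (Fin n),
      (∏ i ∈ s, (X i - C (ξ i)) ^ (γ i)) ∈ (maxIdeal ξ)^(∑ i ∈ s, γ i) := by
    intro s
    induction s using Finset.induction with
    | empty => simp
    | @insert i t hi ih =>
      rw [Finset.prod_insert hi, Finset.sum_insert hi, pow_add]
      refine Ideal.mul_mem_mul (Ideal.pow_mem_pow ?_ _) ih
      exact Ideal.subset_span ⟨i, rfl⟩
  have hm : mdeg γ = ∑ i, γ i := Finsupp.sum_fintype _ _ (fun _ => rfl)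
  rw [xpow, hm]
  exact key Finset.univ

/-- `dapply` as a linear map in the polynomial argument. -/
def dapplyP {n : ℕ} (ξ : Fin n → ℂ) (Λ : (Fin n →₀ ℕ) →₀ ℂ) :
    MvPolynomial (Fin n) ℂ →ₗ[ℂ] ℂ where
  toFun p := dapply ξ Λ p
  map_add' p q := dapply_add ξ Λ p q
  map_smul' c p := by simp [dapply_smul ξ Λ c p]

/-- the normal form via multiplication matrices.  For every
`q ∈ ℂ[x]`, `N(q) = q(ξ+M)(1) = Σ_γ (1/γ!)∂^γq(ξ)·M^γ[1]` (the sum is finite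
by nilpotency of the commuting matrices `M`, so it is truncated at coordinate
bound δ), and the coordinate vector `q(ξ+M)[1]` equals `(Λ₀(q),…,Λ_{δ−1}(q))`:
`N(q) = Σᵢ Λᵢ(q)·(x−ξ)^{αᵢ}`. -/
theorem normal_form_via_matrices {n δ : ℕ} (hδ : 0 < δ)
    (Q : Ideal (MvPolynomial (Fin n) ℂ)) (ξ : Fin n → ℂ)
    (hprim : Q.IsPrimary) (hrad : Q.radical = maxIdeal ξ)
    (α : Fin δ → (Fin n →₀ ℕ)) (Λ : Fin δ → ((Fin n →₀ ℕ) →₀ ℂ))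
    (b : Module.Basis (Fin δ) ℂ (MvPolynomial (Fin n) ℂ ⧸ Q))
    (hb : ∀ i, b i = Ideal.Quotient.mk Q (xpow ξ (α i)))
    (h0 : α ⟨0, hδ⟩ = 0)
    (hdual : ∀ i, ∀ p ∈ Q, dapply ξ (Λ i) p = 0)
    (hlead : ∀ i, (Λ i) (α i) = (mfact (α i) : ℂ)⁻¹)
    (hsupp : ∀ i β, β ∈ (Λ i).support →
      mdeg β ≤ mdeg (α i) ∧ (β = α i ∨ β ∉ Set.range α))
    (hpair : ∀ i j, dapply ξ (Λ i) (xpow ξ (α j)) = if i = j then 1 else 0)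
    (hord : ∀ i j, i ≤ j → mdeg (α i) ≤ mdeg (α j))
    (q : MvPolynomial (Fin n) ℂ) :
    -- the multiplication matrices Mᵢ
    let M : Fin n → Matrix (Fin δ) (Fin δ) ℂ := fun i =>
      LinearMap.toMatrix b b
        (LinearMap.mulLeft ℂ (Ideal.Quotient.mk Q (X i - C (ξ i))))
    -- M^γ (the Mᵢ commute; the product is taken in the order of the indices)
    let Mpow : (Fin n →₀ ℕ) → Matrix (Fin δ) (Fin δ) ℂ := fun γ =>
      (List.ofFn fun i : Fin n => (M i) ^ (γ i)).prod
    -- the coordinate vector q(ξ+M)[1] = Σ_γ (1/γ!)∂^γq(ξ)·M^γ[1]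
    let v : Fin δ → ℂ := fun j =>
      ∑ γ ∈ Finset.Iic (Finsupp.equivFunOnFinite.symm fun _ : Fin n => δ),
        (mfact γ : ℂ)⁻¹ * eval ξ (pdiff γ q) *
          (Mpow γ).mulVec (Pi.single ⟨0, hδ⟩ 1) j
    -- N(q) = q(ξ+M)(1)
    Ideal.Quotient.mk Q q = ∑ j, v j • b j ∧
    -- q(ξ+M)(1) = Σᵢ Λᵢ(q)(x−ξ)^{αᵢ}, i.e. the coordinates are the Λⱼ(q)
    (∀ j, v j = dapply ξ (Λ j) q) := by

  classical
  intro M Mpow v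
  have hMdef : M = fun i => LinearMap.toMatrix b b
      (LinearMap.mulLeft ℂ (Ideal.Quotient.mk Q (X i - C (ξ i)))) := rfl
  have hMpowdef : Mpow = fun γ => (List.ofFn fun i : Fin n => (M i) ^ (γ i)).prod := rfl
  have hvdef : v = fun j =>
      ∑ γ ∈ Finset.Iic (Finsupp.equivFunOnFinite.symm fun _ : Fin n => δ),
        (mfact γ : ℂ)⁻¹ * eval ξ (pdiff γ q) *
          (Mpow γ).mulVec (Pi.single ⟨0, hδ⟩ 1) j := rfl
  set mk' := Ideal.Quotient.mk Q with hmk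
  have hsm : ∀ (a : ℂ) (x : MvPolynomial (Fin n) ℂ), mk' (a • x) = a • mk' x := fun a x =>
    map_smul (Ideal.Quotient.mkₐ ℂ Q) a x
  -- STEP coords : the coordinates of any polynomial are given by the Λ j
  have coords : ∀ p (j : Fin δ), b.repr (mk' p) j = dapply ξ (Λ j) p := by
    intro p j
    set c : Fin δ → ℂ := fun i => b.repr (mk' p) i with hc
    set r : MvPolynomial (Fin n) ℂ := p - ∑ i, c i • xpow ξ (α i) with hrdef
    have hrQ : r ∈ Q := by
      rw [← Ideal.Quotient.eq_zero_iff_mem (I := Q)]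
      have h1 : mk' (∑ i, c i • xpow ξ (α i)) = ∑ i, c i • b i := by
        rw [map_sum]
        refine Finset.sum_congr rfl fun i _ => ?_
        rw [hb i]
        exact hsm (c i) _
      rw [map_sub, h1]
      have h2 : (∑ i, c i • b i) = mk' p := by
        rw [hc]; exact b.sum_repr (mk' p)
      rw [h2, sub_self]
    have hp : p = r + ∑ i, c i • xpow ξ (α i) := by rw [hrdef]; ring
    have : dapply ξ (Λ j) p = c j := by
      calc dapply ξ (Λ j) p = dapplyP ξ (Λ j) p := rfl
        _ = dapplyP ξ (Λ j) r + ∑ i, c i • dapplyP ξ (Λ j) (xpow ξ (α i)) := by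
            conv_lhs => rw [hp]
            rw [map_add, map_sum]
            simp_rw [map_smul]
        _ = 0 + ∑ i, c i • (if j = i then (1:ℂ) else 0) := by
            rw [show dapplyP ξ (Λ j) r = dapply ξ (Λ j) r from rfl, hdual j r hrQ]
            congr 1
            exact Finset.sum_congr rfl fun i _ => by
              rw [show dapplyP ξ (Λ j) (xpow ξ (α i)) = dapply ξ (Λ j) (xpow ξ (α i)) from rfl,
                hpair j i]
        _ = c j := by
            rw [zero_add]
            simp [Finset.sum_ite_eq]
    rw [this]
  -- STEP expand
  have expand : ∀ p, mk' p = ∑ j, dapply ξ (Λ j) p • b j := by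
    intro p
    conv_lhs => rw [← b.sum_repr (mk' p)]
    exact Finset.sum_congr rfl fun j _ => by rw [coords p j]
  -- STEP degree bound
  have hmdeg : ∀ j : Fin δ, mdeg (α j) ≤ δ := by
    intro j
    by_contra hgt
    push_neg at hgt
    have h1 : mk' (xpow ξ (α j)) ∈ (Ideal.map mk' (maxIdeal ξ))^(mdeg (α j)) := by
      rw [← Ideal.map_pow]
      exact Ideal.mem_map_of_mem _ (xpow_mem_pow ξ (α j))
    have h2 : (Ideal.map mk' (maxIdeal ξ))^(mdeg (α j)) ≤ (Ideal.map mk' (maxIdeal ξ))^δ :=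
      Ideal.pow_le_pow_right (le_of_lt hgt)
    have h3 := J_pow_eq_bot Q ξ hrad b
    have h4 : mk' (xpow ξ (α j)) = 0 := by
      have := h2 h1
      rw [h3] at this
      simpa using this
    exact b.ne_zero j (by rw [hb j, h4])
  have hsupple : ∀ j : Fin δ, (Λ j).support ⊆
      Finset.Iic (Finsupp.equivFunOnFinite.symm fun _ : Fin n => δ) := by
    intro j β hβ
    rw [Finset.mem_Iic]
    rw [Finsupp.le_def]
    intro i
    have h1 : β i ≤ mdeg β := by
      have : mdeg β = ∑ k, β k := Finsupp.sum_fintype _ _ (fun _ => rfl)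
      rw [this]
      exact Finset.single_le_sum (fun k _ => Nat.zero_le _) (Finset.mem_univ i)
    have h2 := (hsupp j β hβ).1
    calc β i ≤ mdeg β := h1
      _ ≤ mdeg (α j) := h2
      _ ≤ δ := hmdeg j
      _ = (Finsupp.equivFunOnFinite.symm fun _ : Fin n => δ) i := rfl
  -- STEP matrices
  have hM : ∀ γ : Fin n →₀ ℕ, Mpow γ
      = LinearMap.toMatrix b b (LinearMap.mulLeft ℂ (mk' (xpow ξ γ))) := by
    intro γ
    set R := MvPolynomial (Fin n) ℂ ⧸ Q
    set E : R →ₐ[ℂ] Matrix (Fin δ) (Fin δ) ℂ :=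
      (LinearMap.toMatrixAlgEquiv b).toAlgHom.comp (Algebra.lmul ℂ R) with hE
    have hmulLeft : ∀ m : R, LinearMap.mulLeft ℂ m = Algebra.lmul ℂ R m := by
      intro m; ext x; simp [Algebra.coe_lmul_eq_mul]
    have hEapp : ∀ m : R, E m = LinearMap.toMatrix b b (LinearMap.mulLeft ℂ m) := by
      intro m
      rw [hE]
      simp only [AlgHom.coe_comp, Function.comp_apply, AlgEquiv.toAlgHom_eq_coe,
        AlgHom.coe_coe]
      rw [hmulLeft]
      rfl
    have hfun1 : (fun i : Fin n => M i ^ (γ i))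
        = fun i : Fin n => (E (mk' (X i - C (ξ i))))^(γ i) :=
      funext fun i => by rw [hMdef, hEapp]
    have hfun2 : (fun i : Fin n => (E (mk' (X i - C (ξ i))))^(γ i))
        = fun i : Fin n => E ((mk' (X i - C (ξ i)))^(γ i)) :=
      funext fun i => (map_pow E _ _).symm
    calc Mpow γ = (List.ofFn fun i : Fin n => E ((mk' (X i - C (ξ i)))^(γ i))).prod := by
          simp only [hMpowdef]
          rw [hfun1, hfun2]
      _ = ((List.ofFn fun i : Fin n => (mk' (X i - C (ξ i)))^(γ i)).map E).prod := by
          rw [List.map_ofFn]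
          rfl
      _ = E ((List.ofFn fun i : Fin n => (mk' (X i - C (ξ i)))^(γ i)).prod) :=
          (map_list_prod E _).symm
      _ = E (mk' (xpow ξ γ)) := by
          congr 1
          rw [List.prod_ofFn, xpow, map_prod]
          exact Finset.prod_congr rfl fun i _ => by rw [map_pow]
      _ = _ := hEapp _
  -- STEP vector entries
  have hvec : ∀ (γ : Fin n →₀ ℕ) (j : Fin δ),
      (Mpow γ).mulVec (Pi.single ⟨0, hδ⟩ 1) j = (Λ j) γ * (mfact γ : ℂ) := by
    intro γ j
    have hone : mk' (1 : MvPolynomial (Fin n) ℂ) = b ⟨0, hδ⟩ := by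
      rw [hb ⟨0, hδ⟩, h0]
      congr 1
      simp [xpow]
    have h1 : (Pi.single (⟨0, hδ⟩ : Fin δ) (1:ℂ)) = ⇑(b.repr (mk' 1)) := by
      rw [hone, b.repr_self]
      ext k
      rw [Finsupp.single_apply, Pi.single_apply]
      simp [eq_comm]
    rw [hM γ, h1, LinearMap.toMatrix_mulVec_repr]
    have h2 : (LinearMap.mulLeft ℂ (mk' (xpow ξ γ))) (mk' 1) = mk' (xpow ξ γ) := by
      rw [LinearMap.mulLeft_apply, map_one, mul_one]
    rw [h2, coords]
    exact dapply_xpow_self ξ (Λ j) γ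
  -- conclusion
  have hv : ∀ j, v j = dapply ξ (Λ j) q := by
    intro j
    simp only [hvdef]
    have hterm : ∀ γ ∈ Finset.Iic (Finsupp.equivFunOnFinite.symm fun _ : Fin n => δ),
        (mfact γ : ℂ)⁻¹ * eval ξ (pdiff γ q) * (Mpow γ).mulVec (Pi.single ⟨0, hδ⟩ 1) j
        = (Λ j) γ * eval ξ (pdiff γ q) := by
      intro γ _
      rw [hvec γ j]
      have hne : (mfact γ : ℂ) ≠ 0 := by
        rw [Nat.cast_ne_zero]
        exact (Finset.prod_pos fun i _ => Nat.factorial_pos _).ne'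
      field_simp
    rw [Finset.sum_congr rfl hterm]
    rw [dapply, Finsupp.sum]
    exact (Finset.sum_subset (hsupple j) (fun γ _ hγ => by
      rw [Finsupp.notMem_support_iff.mp hγ, zero_mul])).symm
  refine ⟨?_, hv⟩
  rw [expand q]
  exact Finset.sum_congr rfl fun j _ => by rw [hv j]


end
end

section
/- Consider the commuting nilpotent matrices Mᵢ(ν) obtained by specializing the parametric multiplication matrices of an exponent set E (stable under subtraction, connected to 1) at a solution ν of the commutation relations. Define Λᵢ = Σ_{γ∈ℕⁿ} [M(ν)^γ]_{i,1}(1/γ!)∂_ξ^γ for i = 0,…,δ−1. Then the span D of Λ₀,…,Λ_{δ−1} is stable under the derivations d/d∂_{j,ξ}, with d/d∂_{j,ξ}(Λᵢ) = Σ_{k<i} [Mⱼ(ν)]_{i,k}Λ_k. -/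
open MvPolynomial

noncomputable section

/-- Pairs `(j, β)` indexing the free parameters `μ_{α_j,β}` of the parametric
multiplication matrices: `β = α_k + e_i` lies outside `E` and `|α_k| < |α_j|`. -/
def UsedPair {n δ : ℕ} (α : Fin δ → (Fin n →₀ ℕ))
    (p : Fin δ × (Fin n →₀ ℕ)) : Prop :=
  ∃ (k : Fin δ) (i : Fin n), p.2 = α k + Finsupp.single i 1 ∧
    (∀ l, α l ≠ p.2) ∧ mdeg (α k) < mdeg (α p.1)

open Classical in
/-- The parametric multiplication matrix `Mᵢ(μ)` associated to the exponent
set `E = {α₀,…,α_{δ−1}}`: entry `(j,k)` is `1` if `α_j = α_k + e_i`, `0` if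
`α_k + e_i ∈ E` with `α_j ≠ α_k + e_i`, the fresh variable `μ_{α_j, α_k+e_i}`
if `|α_k| < |α_j|`, and `0` otherwise (strict triangular structure). -/
noncomputable def pmm {n δ : ℕ} (α : Fin δ → (Fin n →₀ ℕ)) (K : Type)
    [CommSemiring K] (i : Fin n) :
    Matrix (Fin δ) (Fin δ) (MvPolynomial (Subtype (UsedPair α)) K) :=
  Matrix.of fun j k =>
    if α j = α k + Finsupp.single i 1 then 1
    else if h2 : ∃ l, α l = α k + Finsupp.single i 1 then 0
    else if h3 : mdeg (α k) < mdeg (α j) then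
      MvPolynomial.X ⟨(j, α k + Finsupp.single i 1),
        k, i, rfl, fun l hl => h2 ⟨l, hl⟩, h3⟩
    else 0

/-- The parametric multiplication matrix viewed in `K[z,μ]`
(`z`-variables in the left summand, `μ`-variables in the right summand). -/
noncomputable def pmmT {n δ : ℕ} (α : Fin δ → (Fin n →₀ ℕ)) (K : Type)
    [CommSemiring K] (i : Fin n) :
    Matrix (Fin δ) (Fin δ)
      (MvPolynomial ((Fin n) ⊕ (Subtype (UsedPair α))) K) :=
  (pmm α K i).map (rename Sum.inr)

/-- `M(μ)^γ = M₁(μ)^{γ₁}⋯Mₙ(μ)^{γₙ}` in the fixed order of the indices. -/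
noncomputable def pmmPowT {n δ : ℕ} (α : Fin δ → (Fin n →₀ ℕ)) (K : Type)
    [CommSemiring K] (γ : Fin n →₀ ℕ) :
    Matrix (Fin δ) (Fin δ)
      (MvPolynomial ((Fin n) ⊕ (Subtype (UsedPair α))) K) :=
  (List.ofFn fun i : Fin n => (pmmT α K i) ^ (γ i)).prod

/-- The parametric normal form `N_{z,μ}(p) = Σ_γ (1/γ!)∂^γ(p)·M(μ)^γ[1]`,
an element of `K[z,μ]^δ`; the sum is finite since `M(μ)^γ = 0` for `|γ| ≥ δ`,
so it is truncated at coordinatewise bound δ. -/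
noncomputable def pnf {n δ : ℕ} [NeZero δ] (α : Fin δ → (Fin n →₀ ℕ))
    (K : Type) [Field K] (p : MvPolynomial (Fin n) K) :
    Fin δ → MvPolynomial ((Fin n) ⊕ (Subtype (UsedPair α))) K := fun j =>
  ∑ γ ∈ Finset.Iic (Finsupp.equivFunOnFinite.symm fun _ : Fin n => δ),
    (mfact γ : K)⁻¹ •
      (rename Sum.inl (pdiff γ p) *
        (pmmPowT α K γ).mulVec (Pi.single 0 1) j)

/-- The commutator ideal `C`, generated by the entries of
`Mᵢ(μ)Mⱼ(μ) − Mⱼ(μ)Mᵢ(μ)`. -/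
noncomputable def commIdeal {n δ : ℕ} (α : Fin δ → (Fin n →₀ ℕ)) (K : Type)
    [CommRing K] :
    Ideal (MvPolynomial ((Fin n) ⊕ (Subtype (UsedPair α))) K) :=
  Ideal.span {t | ∃ (i i' : Fin n) (j k : Fin δ),
    t = (pmmT α K i * pmmT α K i' - pmmT α K i' * pmmT α K i) j k}

/-- formal derivative `d/d∂_j` acting on polynomial differential operators. -/
noncomputable def dder {n : ℕ} (j : Fin n) (L : (Fin n →₀ ℕ) →₀ ℂ) :
    (Fin n →₀ ℕ) →₀ ℂ :=
  L.sum fun β c => Finsupp.single (β - Finsupp.single j 1) (c * (β j))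


/-! ### Auxiliary lemmas -/

lemma mdeg_add' {n : ℕ} (β γ : Fin n →₀ ℕ) : mdeg (β + γ) = mdeg β + mdeg γ :=
  Finsupp.sum_add_index' (fun _ => rfl) (fun _ _ _ => rfl)

lemma mdeg_single' {n : ℕ} (j : Fin n) : mdeg (Finsupp.single j 1) = 1 :=
  Finsupp.sum_single_index rfl

lemma tri_pow_apply {δ : ℕ} (A : Matrix (Fin δ) (Fin δ) ℂ)
    (h : ∀ i k : Fin δ, i ≤ k → A i k = 0) :
    ∀ (m : ℕ) (i k : Fin δ), (i : ℕ) < m + k → (A ^ m) i k = 0 := by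
  intro m
  induction m with
  | zero => intro i k hik; rw [pow_zero, Matrix.one_apply_ne]
            · rintro rfl; omega
  | succ m ih =>
    intro i k hik
    rw [pow_succ', Matrix.mul_apply]
    apply Finset.sum_eq_zero
    intro l _
    by_cases hl : i ≤ l
    · rw [h i l hl, zero_mul]
    · rw [ih l k (by push_neg at hl; omega), mul_zero]

lemma tri_pow_zero {δ : ℕ} (A : Matrix (Fin δ) (Fin δ) ℂ)
    (h : ∀ i k : Fin δ, i ≤ k → A i k = 0) (m : ℕ) (hm : δ ≤ m) : A ^ m = 0 := by
  have hδ : A ^ δ = 0 := by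
    ext i k
    exact tri_pow_apply A h δ i k (by omega)
  calc A ^ m = A ^ δ * A ^ (m - δ) := by rw [← pow_add]; congr 1; omega
  _ = 0 := by rw [hδ, zero_mul]

lemma ofFn_prod_update {M : Type*} [Monoid M] :
    ∀ {n : ℕ} (f : Fin n → M) (j : Fin n) (c : M), (∀ l, Commute c (f l)) →
      (List.ofFn (Function.update f j (c * f j))).prod = c * (List.ofFn f).prod := by
  intro n
  induction n with
  | zero => intro f j; exact j.elim0
  | succ n ih =>
    intro f j c hc
    rw [List.ofFn_succ, List.ofFn_succ, List.prod_cons, List.prod_cons]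
    induction j using Fin.cases with
    | zero =>
      rw [Function.update_self]
      have : (fun i : Fin n => Function.update f 0 (c * f 0) i.succ)
          = fun i : Fin n => f i.succ := by
        funext l
        simp [Function.update_of_ne (Fin.succ_ne_zero l)]
      rw [this, mul_assoc]
    | succ j =>
      have h1 : Function.update f j.succ (c * f j.succ) 0 = f 0 :=
        Function.update_of_ne (Fin.succ_ne_zero j).symm _ _
      have h2 : (fun i : Fin n => Function.update f j.succ (c * f j.succ) i.succ)
          = Function.update (f ∘ Fin.succ) j (c * (f ∘ Fin.succ) j) := by
        funext l
        by_cases hl : l = j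
        · subst hl; simp [Function.update_self]
        · simp [Function.update_of_ne hl,
            Function.update_of_ne (fun h => hl (Fin.succ_injective _ h))]
      rw [h1, h2, ih (f ∘ Fin.succ) j c (fun l => hc l.succ), ← mul_assoc,
        ← (hc 0).eq, mul_assoc]
      rfl

lemma mfact_add_single {n : ℕ} (γ : Fin n →₀ ℕ) (j : Fin n) :
    mfact (γ + Finsupp.single j 1) = (γ j + 1) * mfact γ := by
  unfold mfact
  rw [← Finset.mul_prod_erase Finset.univ _ (Finset.mem_univ j),
    ← Finset.mul_prod_erase Finset.univ (fun i => Nat.factorial (γ i)) (Finset.mem_univ j)]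
  have h1 : (γ + Finsupp.single j 1 : Fin n →₀ ℕ) j = γ j + 1 := by
    simp [Finsupp.add_apply]
  have h2 : ∀ i ∈ Finset.univ.erase j,
      Nat.factorial ((γ + Finsupp.single j 1 : Fin n →₀ ℕ) i) = Nat.factorial (γ i) := by
    intro i hi
    have := Finset.ne_of_mem_erase hi
    simp [Finsupp.add_apply, Finsupp.single_apply, Ne.symm this, this]
  rw [Finset.prod_congr rfl h2, h1, Nat.factorial_succ, mul_assoc]

lemma dder_single {n : ℕ} (j : Fin n) (β : Fin n →₀ ℕ) (c : ℂ) :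
    dder j (Finsupp.single β c) = Finsupp.single (β - Finsupp.single j 1) (c * β j) :=
  Finsupp.sum_single_index (by simp)

lemma dder_zero {n : ℕ} (j : Fin n) : dder j 0 = 0 :=
  Finsupp.sum_zero_index

lemma dder_add {n : ℕ} (j : Fin n) (a b : (Fin n →₀ ℕ) →₀ ℂ) :
    dder j (a + b) = dder j a + dder j b :=
  Finsupp.sum_add_index' (fun β => by simp) (fun β c d => by
    rw [add_mul, Finsupp.single_add])

lemma dder_smul {n : ℕ} (j : Fin n) (c : ℂ) (a : (Fin n →₀ ℕ) →₀ ℂ) :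
    dder j (c • a) = c • dder j a := by
  unfold dder
  rw [Finsupp.sum_smul_index (fun β => by simp), Finsupp.smul_sum]
  exact Finsupp.sum_congr fun β _ => by
    rw [Finsupp.smul_single, smul_eq_mul, mul_assoc]

lemma dder_sum {n : ℕ} {ι : Type*} (j : Fin n) (s : Finset ι)
    (f : ι → ((Fin n →₀ ℕ) →₀ ℂ)) :
    dder j (∑ x ∈ s, f x) = ∑ x ∈ s, dder j (f x) := by
  classical
  induction s using Finset.induction with
  | empty => simp [dder_zero]
  | insert x s hx ih =>
    rw [Finset.sum_insert hx, Finset.sum_insert hx, dder_add, ih]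

/-- for commuting nilpotent matrices `Mᵢ(ν)` obtained by
specializing the parametric multiplication matrices at a solution ν of the
commutation relations, the functionals `Λᵢ = Σ_γ [M(ν)^γ]_{i,1}(1/γ!)∂_ξ^γ`
span a space stable under the derivations `d/d∂_{j,ξ}`, with
`d/d∂_{j,ξ}(Λᵢ) = Σ_{k<i} [Mⱼ(ν)]_{i,k} Λ_k`. -/
theorem dual_functionals_derivation_stable {n δ : ℕ} [NeZero δ]
    (α : Fin δ → (Fin n →₀ ℕ))
    (h0 : α 0 = 0)
    (hinj : Function.Injective α)
    (hstab : ∀ (k : Fin δ) (β : Fin n →₀ ℕ), β ≤ α k → ∃ l, α l = β)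
    (hconn : ∀ j, α j ≠ 0 → ∃ (k : Fin δ) (i : Fin n),
      α j = α k + Finsupp.single i 1)
    (hord : ∀ i j : Fin δ, i ≤ j → mdeg (α i) ≤ mdeg (α j))
    (ξ : Fin n → ℂ) (ν : Subtype (UsedPair α) → ℂ)
    -- the specialized multiplication matrices ...
    (Mν : Fin n → Matrix (Fin δ) (Fin δ) ℂ)
    (hMν : ∀ i, Mν i = (pmm α ℂ i).map (aeval ν))
    -- ... are pairwise commuting
    (hcomm : ∀ i j, Mν i * Mν j = Mν j * Mν i) :
    -- Λᵢ = Σ_γ [M(ν)^γ]_{i,1}(1/γ!)∂_ξ^γ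
    let Λν : Fin δ → ((Fin n →₀ ℕ) →₀ ℂ) := fun i =>
      ∑ γ ∈ Finset.Iic (Finsupp.equivFunOnFinite.symm fun _ : Fin n => δ),
        Finsupp.single γ
          (((List.ofFn fun l : Fin n => (Mν l) ^ (γ l)).prod i 0) *
            (mfact γ : ℂ)⁻¹)
    -- d/d∂_j Λᵢ = Σ_{k<i} [Mⱼ(ν)]_{i,k} Λ_k
    (∀ (j : Fin n) (i : Fin δ),
      dder j (Λν i) = ∑ k ∈ Finset.Iio i, (Mν j) i k • Λν k) ∧
    -- stability of the span under the derivations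
    (∀ (j : Fin n), ∀ L ∈ Submodule.span ℂ (Set.range Λν),
      dder j L ∈ Submodule.span ℂ (Set.range Λν)) := by
  classical
  intro Λν
  set D : Fin n →₀ ℕ := Finsupp.equivFunOnFinite.symm fun _ : Fin n => δ with hD
  set F : (Fin n →₀ ℕ) → Matrix (Fin δ) (Fin δ) ℂ :=
    fun γ => (List.ofFn fun l : Fin n => (Mν l) ^ (γ l)).prod with hF
  have hΛ : ∀ i, Λν i
      = ∑ γ ∈ Finset.Iic D, Finsupp.single γ (F γ i 0 * (mfact γ : ℂ)⁻¹) := fun i => rfl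
  -- strict lower triangularity
  have htri : ∀ (j : Fin n) (i k : Fin δ), i ≤ k → Mν j i k = 0 := by
    intro j i k hik
    have hle : mdeg (α i) ≤ mdeg (α k) := hord i k hik
    rw [hMν, Matrix.map_apply]
    unfold pmm
    rw [Matrix.of_apply]
    split_ifs with h1 h2 h3
    · exfalso
      have := congrArg mdeg h1
      rw [mdeg_add', mdeg_single'] at this
      omega
    · exact map_zero _
    · exfalso; omega
    · exact map_zero _
  have hnil : ∀ (j : Fin n) (m : ℕ), δ ≤ m → (Mν j) ^ m = 0 :=
    fun j m hm => tri_pow_zero _ (htri j) m hm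
  have hFsucc : ∀ (γ : Fin n →₀ ℕ) (j : Fin n),
      F (γ + Finsupp.single j 1) = Mν j * F γ := by
    intro γ j
    have hcom : ∀ l, Commute (Mν j) ((Mν l) ^ (γ l)) :=
      fun l => Commute.pow_right (hcomm j l) (γ l)
    have hupd : (fun l : Fin n => (Mν l) ^ ((γ + Finsupp.single j 1 : Fin n →₀ ℕ) l))
        = Function.update (fun l : Fin n => (Mν l) ^ (γ l)) j (Mν j * (Mν j) ^ (γ j)) := by
      funext l
      by_cases hl : l = j
      · subst hl
        simp [Finsupp.add_apply, Function.update_self, pow_succ']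
      · simp [Function.update_of_ne hl, Finsupp.add_apply,
          Finsupp.single_apply, Ne.symm hl]
    simp only [hF]
    rw [hupd, ofFn_prod_update _ j _ hcom]
  have hFzero : ∀ (γ : Fin n →₀ ℕ) (j : Fin n), δ ≤ γ j → F γ = 0 := by
    intro γ j h
    apply List.prod_eq_zero
    rw [List.mem_ofFn]
    exact ⟨j, hnil j (γ j) h⟩
  have hmem : ∀ γ : Fin n →₀ ℕ, γ ∈ Finset.Iic D ↔ ∀ l, γ l ≤ δ := by
    intro γ
    rw [Finset.mem_Iic, Finsupp.le_def]
    exact Iff.rfl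
  have key : ∀ (j : Fin n) (i : Fin δ),
      dder j (Λν i) = ∑ k ∈ Finset.Iio i, (Mν j) i k • Λν k := by
    intro j i
    have hRHS : ∑ k ∈ Finset.Iio i, (Mν j) i k • Λν k
        = ∑ β ∈ Finset.Iic D,
            Finsupp.single β (F (β + Finsupp.single j 1) i 0 * (mfact β : ℂ)⁻¹) := by
      simp only [hΛ, Finset.smul_sum, Finsupp.smul_single, smul_eq_mul]
      rw [Finset.sum_comm]
      apply Finset.sum_congr rfl
      intro β _
      have hms := map_sum (Finsupp.singleAddHom β (M := ℂ))
        (fun k => Mν j i k * (F β k 0 * (mfact β : ℂ)⁻¹)) (Finset.Iio i)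
      simp only [Finsupp.singleAddHom_apply] at hms
      rw [← hms]
      congr 1
      rw [hFsucc β j, Matrix.mul_apply, Finset.sum_mul]
      simp only [← mul_assoc]
      apply Finset.sum_subset (Finset.subset_univ _)
      intro k _ hk
      rw [htri j i k (by simp only [Finset.mem_Iio, not_lt] at hk; exact hk),
        zero_mul, zero_mul]
    rw [hΛ i, dder_sum, hRHS]
    simp only [dder_single]
    rw [← Finset.sum_filter_of_ne (p := fun γ : Fin n →₀ ℕ => 0 < γ j)
      (fun γ _ hne => by
        by_contra h
        apply hne
        rw [Nat.not_lt, Nat.le_zero] at h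
        rw [h, Nat.cast_zero, mul_zero, Finsupp.single_zero]),
      ← Finset.sum_filter_of_ne (p := fun β : Fin n →₀ ℕ => β j < δ)
      (s := Finset.Iic D)
      (fun β _ hne => by
        by_contra h
        apply hne
        rw [Nat.not_lt] at h
        have : F (β + Finsupp.single j 1) = 0 := by
          apply hFzero _ j
          rw [Finsupp.add_apply, Finsupp.single_eq_same]
          omega
        rw [this, Matrix.zero_apply, zero_mul, Finsupp.single_zero])]
    apply Finset.sum_nbij' (i := fun γ => γ - Finsupp.single j 1)
      (j := fun β => β + Finsupp.single j 1)
    · intro γ hγ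
      rw [Finset.mem_filter, hmem] at hγ ⊢
      obtain ⟨hγ1, hγ2⟩ := hγ
      constructor
      · intro l
        rw [Finsupp.tsub_apply]
        exact le_trans (Nat.sub_le _ _) (hγ1 l)
      · rw [Finsupp.tsub_apply, Finsupp.single_eq_same]
        have := hγ1 j
        omega
    · intro β hβ
      rw [Finset.mem_filter, hmem] at hβ ⊢
      obtain ⟨hβ1, hβ2⟩ := hβ
      constructor
      · intro l
        rw [Finsupp.add_apply, Finsupp.single_apply]
        by_cases hl : j = l
        · subst hl; simpa using hβ2
        · simpa [hl] using hβ1 l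
      · rw [Finsupp.add_apply, Finsupp.single_eq_same]
        omega
    · intro γ hγ
      rw [Finset.mem_filter] at hγ
      exact tsub_add_cancel_of_le (Finsupp.single_le_iff.mpr hγ.2)
    · intro β _
      exact add_tsub_cancel_right _ _
    · intro γ hγ
      rw [Finset.mem_filter] at hγ
      obtain ⟨-, hγ2⟩ := hγ
      have hrec : γ - Finsupp.single j 1 + Finsupp.single j 1 = γ :=
        tsub_add_cancel_of_le (Finsupp.single_le_iff.mpr hγ2)
      rw [hrec]
      congr 1
      have hγj : (γ - Finsupp.single j 1 : Fin n →₀ ℕ) j + 1 = γ j := by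
        rw [Finsupp.tsub_apply, Finsupp.single_eq_same]
        omega
      have hmfN : mfact γ
          = ((γ - Finsupp.single j 1 : Fin n →₀ ℕ) j + 1) * mfact (γ - Finsupp.single j 1) := by
        nth_rewrite 1 [← hrec]
        rw [mfact_add_single]
      have hne : (((γ - Finsupp.single j 1 : Fin n →₀ ℕ) j : ℂ) + 1) ≠ 0 :=
        Nat.cast_add_one_ne_zero _
      have hm1 : ((mfact (γ - Finsupp.single j 1) : ℂ)) ≠ 0 := by
        have hp : 0 < mfact (γ - Finsupp.single j 1) :=
          Finset.prod_pos fun _ _ => Nat.factorial_pos _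
        exact_mod_cast hp.ne'
      have hγ0 : ((γ j : ℕ) : ℂ) ≠ 0 := Nat.cast_ne_zero.mpr (by omega)
      have hmfN' : mfact γ = γ j * mfact (γ - Finsupp.single j 1) := by
        rw [hmfN, hγj]
      rw [hmfN']
      push_cast
      field_simp
  constructor
  · exact key
  · intro j L hL
    induction hL using Submodule.span_induction with
    | mem x hx =>
      obtain ⟨i, rfl⟩ := hx
      rw [key]
      exact Submodule.sum_mem _ fun k _ =>
        Submodule.smul_mem _ _ (Submodule.subset_span ⟨k, rfl⟩)
    | zero => rw [dder_zero]; exact Submodule.zero_mem _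
    | add a b _ _ ha hb => rw [dder_add]; exact Submodule.add_mem _ ha hb
    | smul c a _ ha => rw [dder_smul]; exact Submodule.smul_mem _ _ ha


end
end
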